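/- For all real-valued random variables G and G̃, if Y is a binary random variable with ℙ(Y = 1 | G) = 1/(1 + e^{−G}), then E[KL( ℙ(Y ∈ · | G) ‖ ℙ(Y ∈ · | G ← G̃) )] ≤ E[(G − G̃)²], where ℙ(Y ∈ · | G ← G̃) denotes the Bernoulli distribution with success probability 1/(1 + e^{−G̃}). -/

import Mathlib

open MeasureTheory

noncomputable def sigmoid (z : ℝ) : ℝ := 1 / (1 + Real.exp (-z))

noncomputable def klBernoulli (p q : ℝ) : ℝ :=
  p * Real.log (p / q) + (1 - p) * Real.log ((1 - p) / (1 - q))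

lemma exp_pos' (z : ℝ) : (0:ℝ) < 1 + Real.exp (-z) := by positivity

lemma sigmoid_pos (z : ℝ) : 0 < sigmoid z := by unfold sigmoid; positivity

lemma sigmoid_lt_one (z : ℝ) : sigmoid z < 1 := by
  unfold sigmoid
  rw [div_lt_one (exp_pos' z)]
  linarith [Real.exp_pos (-z)]

lemma one_sub_sigmoid (z : ℝ) : 1 - sigmoid z = Real.exp (-z) / (1 + Real.exp (-z)) := by
  unfold sigmoid; field_simp; ring

lemma hasDerivAt_sigmoid (z : ℝ) :
    HasDerivAt sigmoid (sigmoid z * (1 - sigmoid z)) z := by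
  have h1 : HasDerivAt (fun z : ℝ => 1 + Real.exp (-z)) (-Real.exp (-z)) z := by
    have := (Real.hasDerivAt_exp (-z)).comp z ((hasDerivAt_id z).neg)
    simpa using (this.const_add 1)
  have h2 := h1.inv (ne_of_gt (exp_pos' z))
  have he : sigmoid = fun z : ℝ => (1 + Real.exp (-z))⁻¹ := by
    funext x; unfold sigmoid; rw [one_div]
  rw [he]
  refine h2.congr_deriv (Eq.symm ?_)
  show (1 + Real.exp (-z))⁻¹ * (1 - (1 + Real.exp (-z))⁻¹)
      = - -Real.exp (-z) / (1 + Real.exp (-z)) ^ 2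
  have hz := exp_pos' z
  field_simp
  ring

lemma sigmoid_deriv_abs_le (c : ℝ) : |sigmoid c * (1 - sigmoid c)| ≤ 1 := by
  have h1 := sigmoid_pos c; have h2 := sigmoid_lt_one c
  rw [abs_of_nonneg (by nlinarith)]; nlinarith

lemma sigmoid_lipschitz (x y : ℝ) : |sigmoid x - sigmoid y| ≤ |x - y| := by
  rcases lt_trichotomy x y with h | h | h
  · obtain ⟨c, _, hc2⟩ := exists_hasDerivAt_eq_slope sigmoid
      (fun z => sigmoid z * (1 - sigmoid z)) h
      (fun z _ => (hasDerivAt_sigmoid z).continuousAt.continuousWithinAt)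
      (fun z _ => hasDerivAt_sigmoid z)
    rw [eq_div_iff (sub_ne_zero.mpr h.ne')] at hc2
    have he : sigmoid x - sigmoid y = (sigmoid c * (1 - sigmoid c)) * (x - y) := by
      linear_combination hc2
    rw [he, abs_mul]
    calc |sigmoid c * (1 - sigmoid c)| * |x - y| ≤ 1 * |x - y| := by
          gcongr; exact sigmoid_deriv_abs_le c
      _ = |x - y| := one_mul _
  · simp [h]
  · obtain ⟨c, _, hc2⟩ := exists_hasDerivAt_eq_slope sigmoid
      (fun z => sigmoid z * (1 - sigmoid z)) h
      (fun z _ => (hasDerivAt_sigmoid z).continuousAt.continuousWithinAt)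
      (fun z _ => hasDerivAt_sigmoid z)
    rw [eq_div_iff (sub_ne_zero.mpr h.ne')] at hc2
    have he : sigmoid x - sigmoid y = (sigmoid c * (1 - sigmoid c)) * (x - y) := by
      linear_combination -hc2
    rw [he, abs_mul]
    calc |sigmoid c * (1 - sigmoid c)| * |x - y| ≤ 1 * |x - y| := by
          gcongr; exact sigmoid_deriv_abs_le c
      _ = |x - y| := one_mul _

noncomputable def Lfun (z : ℝ) : ℝ := Real.log (1 + Real.exp (-z))

lemma hasDerivAt_Lfun (z : ℝ) : HasDerivAt Lfun (sigmoid z - 1) z := by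
  have h1 : HasDerivAt (fun z : ℝ => 1 + Real.exp (-z)) (-Real.exp (-z)) z := by
    have := (Real.hasDerivAt_exp (-z)).comp z ((hasDerivAt_id z).neg)
    simpa using (this.const_add 1)
  have h2 := h1.log (ne_of_gt (exp_pos' z))
  refine h2.congr_deriv ?_
  have h3 := one_sub_sigmoid z
  have : sigmoid z - 1 = -(Real.exp (-z) / (1 + Real.exp (-z))) := by linarith
  rw [this, neg_div]

lemma kl_eq (a b : ℝ) :
    klBernoulli (sigmoid a) (sigmoid b)
      = Lfun b - Lfun a + (1 - sigmoid a) * (b - a) := by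
  have ha := exp_pos' a
  have hb := exp_pos' b
  have hea := Real.exp_pos (-a)
  have heb := Real.exp_pos (-b)
  unfold klBernoulli Lfun
  rw [one_sub_sigmoid a, one_sub_sigmoid b]
  have h1 : sigmoid a / sigmoid b = (1 + Real.exp (-b)) / (1 + Real.exp (-a)) := by
    unfold sigmoid; field_simp
  have h2 : (Real.exp (-a) / (1 + Real.exp (-a))) / (Real.exp (-b) / (1 + Real.exp (-b)))
      = (Real.exp (-a) * (1 + Real.exp (-b))) / (Real.exp (-b) * (1 + Real.exp (-a))) := by
    field_simp
  rw [h1, h2, Real.log_div (by positivity) (by positivity),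
    Real.log_div (by positivity) (by positivity),
    Real.log_mul (by positivity) (by positivity),
    Real.log_mul (by positivity) (by positivity),
    Real.log_exp, Real.log_exp]
  have hsig : sigmoid a = 1 / (1 + Real.exp (-a)) := rfl
  rw [hsig]
  field_simp
  ring

lemma kl_le_sq (a b : ℝ) : klBernoulli (sigmoid a) (sigmoid b) ≤ (a - b) ^ 2 := by
  rcases eq_or_ne a b with h | h
  · rw [h, kl_eq]; simp
  have hkey : ∃ c, |c - a| ≤ |a - b| ∧
      Lfun b - Lfun a = (sigmoid c - 1) * (b - a) := by
    rcases h.lt_or_gt with hlt | hlt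
    · obtain ⟨c, hc, hc2⟩ := exists_hasDerivAt_eq_slope Lfun (fun z => sigmoid z - 1) hlt
        (fun z _ => (hasDerivAt_Lfun z).continuousAt.continuousWithinAt)
        (fun z _ => hasDerivAt_Lfun z)
      rw [eq_div_iff (sub_ne_zero.mpr hlt.ne')] at hc2
      refine ⟨c, ?_, hc2.symm⟩
      rw [abs_of_nonneg (by linarith [hc.1] : (0:ℝ) ≤ c - a),
        abs_of_nonpos (by linarith : a - b ≤ 0)]
      linarith [hc.2]
    · obtain ⟨c, hc, hc2⟩ := exists_hasDerivAt_eq_slope Lfun (fun z => sigmoid z - 1) hlt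
        (fun z _ => (hasDerivAt_Lfun z).continuousAt.continuousWithinAt)
        (fun z _ => hasDerivAt_Lfun z)
      rw [eq_div_iff (sub_ne_zero.mpr hlt.ne')] at hc2
      refine ⟨c, ?_, by linear_combination hc2⟩
      rw [abs_of_nonpos (by linarith [hc.2] : c - a ≤ 0),
        abs_of_nonneg (by linarith : (0:ℝ) ≤ a - b)]
      linarith [hc.1]
  obtain ⟨c, hca, hLb⟩ := hkey
  rw [kl_eq, hLb]
  have he : (sigmoid c - 1) * (b - a) + (1 - sigmoid a) * (b - a)
      = (sigmoid c - sigmoid a) * (b - a) := by ring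
  rw [he]
  calc (sigmoid c - sigmoid a) * (b - a) ≤ |(sigmoid c - sigmoid a) * (b - a)| :=
        le_abs_self _
    _ = |sigmoid c - sigmoid a| * |b - a| := abs_mul _ _
    _ ≤ |a - b| * |a - b| := by
        rw [abs_sub_comm b a]
        exact mul_le_mul ((sigmoid_lipschitz c a).trans hca) le_rfl (abs_nonneg _) (abs_nonneg _)
    _ = (a - b) ^ 2 := by rw [abs_mul_abs_self, sq]

theorem expected_kl_le_expected_sq {Ω : Type*} [MeasurableSpace Ω] (μ : Measure Ω)
    [IsProbabilityMeasure μ] (G Gt : Ω → ℝ) (hG : Measurable G) (hGt : Measurable Gt) :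
    ∫⁻ ω, ENNReal.ofReal (klBernoulli (sigmoid (G ω)) (sigmoid (Gt ω))) ∂μ
      ≤ ∫⁻ ω, ENNReal.ofReal ((G ω - Gt ω) ^ 2) ∂μ :=
  lintegral_mono fun ω => ENNReal.ofReal_le_ofReal (kl_le_sq (G ω) (Gt ω))
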